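/- Let d ≥ 1 and N ≥ 1 be integers and let ℓ_1, …, ℓ_{d+1} be positive integers with ℓ_i ≤ N for all i and ℓ_i + ℓ_j ≥ N for all 1 ≤ i < j ≤ d+1. Then the number of lattice points in V_{ℓ,N}^d equals C(N+d, d) − Σ_{i=1}^{d+1} C(N−ℓ_i+d−1, d), where C(a, b) denotes the binomial coefficient (equal to 0 when a < b). -/

import Mathlib

open Finset

/-- The discrete polyhedral domain `V_{ℓ,N}^d`:
lattice points `x ∈ ℕ₀^d` with `x i ≤ ℓ i` for `1 ≤ i ≤ d` and `N - ℓ_{d+1} ≤ |x| ≤ N`. -/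
def polyDomain (d N : ℕ) (ℓ : Fin (d + 1) → ℕ) : Finset (Fin d → ℕ) :=
  (Fintype.piFinset fun i : Fin d => Finset.range (ℓ i.castSucc + 1)).filter fun x =>
    N - ℓ (Fin.last d) ≤ ∑ i, x i ∧ ∑ i, x i ≤ N

/-- The discrete simplex of points with coordinate sum at most `M`. -/
def simplexF (d M : ℕ) : Finset (Fin d → ℕ) :=
  (Fintype.piFinset fun _ : Fin d => Finset.range (M + 1)).filter fun x => ∑ i, x i ≤ M

lemma mem_simplexF {d M : ℕ} (x : Fin d → ℕ) : x ∈ simplexF d M ↔ ∑ i, x i ≤ M := by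
  simp only [simplexF, Finset.mem_filter, Fintype.mem_piFinset, Finset.mem_range]
  constructor
  · tauto
  · intro h
    refine ⟨fun i => ?_, h⟩
    have := Finset.single_le_sum (f := x) (fun j _ => Nat.zero_le _) (Finset.mem_univ i)
    omega

lemma card_simplexF (d M : ℕ) : (simplexF d M).card = (M + d).choose d := by
  induction d generalizing M with
  | zero =>
    rw [Nat.choose_zero_right]
    rw [Finset.card_eq_one]
    refine ⟨fun i => 0, ?_⟩
    ext x
    simp only [mem_simplexF, Finset.mem_singleton]
    constructor
    · intro _; ext i; exact absurd i.2 (by omega)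
    · rintro rfl; simp
  | succ d ih =>
    have key : simplexF (d + 1) M = (Finset.range (M + 1)).biUnion
        (fun k => (simplexF d (M - k)).image (fun y => (Fin.cons k y : Fin (d+1) → ℕ))) := by
      ext x
      simp only [mem_simplexF, Finset.mem_biUnion, Finset.mem_range, Finset.mem_image]
      constructor
      · intro h
        have h0 : x 0 ≤ ∑ i, x i :=
          Finset.single_le_sum (f := x) (fun j _ => Nat.zero_le _) (Finset.mem_univ 0)
        have hsum : ∑ i, x i = x 0 + ∑ i, Fin.tail x i := by
          rw [Fin.sum_univ_succ]; rfl
        refine ⟨x 0, by omega, Fin.tail x, by omega, (Fin.cons_self_tail x)⟩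
      · rintro ⟨k, hk, y, hy, rfl⟩
        rw [Fin.sum_univ_succ]
        simp only [Fin.cons_zero, Fin.cons_succ]
        omega
    rw [key, Finset.card_biUnion]
    · have hcards : ∀ k ∈ Finset.range (M + 1),
          ((simplexF d (M - k)).image (fun y => (Fin.cons k y : Fin (d+1) → ℕ))).card = (M - k + d).choose d := by
        intro k _
        have hinj : Function.Injective (fun y : Fin d → ℕ => (Fin.cons k y : Fin (d+1) → ℕ)) := by
          intro y z hyz
          ext j
          have := congrFun hyz j.succ
          simpa using this
        rw [Finset.card_image_of_injective _ hinj, ih]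
      rw [Finset.sum_congr rfl hcards]
      have := Finset.sum_range_reflect (fun j => (j + d).choose d) (M + 1)
      simp only [Nat.add_sub_cancel] at this
      calc ∑ k ∈ Finset.range (M + 1), (M - k + d).choose d
          = ∑ j ∈ Finset.range (M + 1), (j + d).choose d := this
        _ = (M + d + 1).choose (d + 1) := Nat.sum_range_add_choose M d
        _ = (M + (d + 1)).choose (d + 1) := by ring_nf
    · intro a _ b _ hab
      simp only [Finset.disjoint_left, Finset.mem_image]
      rintro x ⟨y, _, rfl⟩ ⟨z, _, hz⟩
      apply hab
      have := congrFun hz 0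
      simpa using this.symm
  
lemma mem_polyDomain {d N : ℕ} {ℓ : Fin (d + 1) → ℕ} (x : Fin d → ℕ) :
    x ∈ polyDomain d N ℓ ↔
      (∀ j : Fin d, x j ≤ ℓ j.castSucc) ∧ N ≤ ∑ i, x i + ℓ (Fin.last d) ∧ ∑ i, x i ≤ N := by
  simp only [polyDomain, Finset.mem_filter, Fintype.mem_piFinset, Finset.mem_range]
  constructor
  · rintro ⟨h1, h2, h3⟩
    exact ⟨fun j => by have := h1 j; omega, by omega, h3⟩
  · rintro ⟨h1, h2, h3⟩
    exact ⟨fun j => by have := h1 j; omega, by omega, h3⟩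

theorem stmt0 (d N : ℕ) (hd : 1 ≤ d) (hN : 1 ≤ N) (ℓ : Fin (d + 1) → ℕ)
    (hpos : ∀ i, 1 ≤ ℓ i) (hle : ∀ i, ℓ i ≤ N)
    (hpair : ∀ i j : Fin (d + 1), i < j → N ≤ ℓ i + ℓ j) :
    ((polyDomain d N ℓ).card : ℤ) =
      ((N + d).choose d : ℤ) - ∑ i : Fin (d + 1), ((N - ℓ i + d - 1).choose d : ℤ) := by
  classical
  set Bad : Fin (d + 1) → Finset (Fin d → ℕ) := fun i =>
    (simplexF d N).filter fun x =>
      if h : (i : ℕ) < d then ℓ i < x ⟨i, h⟩ else ∑ j, x j + ℓ i < N with hBad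
  have memBad : ∀ (i : Fin (d + 1)) (x : Fin d → ℕ), x ∈ Bad i ↔
      (∑ j, x j ≤ N ∧ if h : (i : ℕ) < d then ℓ i < x ⟨i, h⟩ else ∑ j, x j + ℓ i < N) := by
    intro i x
    simp [hBad, Finset.mem_filter, mem_simplexF]
  -- covering
  have hcover : simplexF d N = polyDomain d N ℓ ∪ Finset.univ.biUnion Bad := by
    ext x
    simp only [Finset.mem_union, Finset.mem_biUnion, Finset.mem_univ, true_and,
      mem_simplexF, mem_polyDomain, memBad]
    constructor
    · intro hx
      by_cases hp : (∀ j : Fin d, x j ≤ ℓ j.castSucc) ∧ N ≤ ∑ i, x i + ℓ (Fin.last d)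
      · exact Or.inl ⟨hp.1, hp.2, hx⟩
      · right
        push_neg at hp
        by_cases hq : ∀ j : Fin d, x j ≤ ℓ j.castSucc
        · refine ⟨Fin.last d, hx, ?_⟩
          rw [dif_neg (by simp)]
          have := hp hq
          omega
        · push_neg at hq
          obtain ⟨j, hj⟩ := hq
          refine ⟨j.castSucc, hx, ?_⟩
          have hjd : ((j.castSucc : Fin (d+1)) : ℕ) < d := by simp
          rw [dif_pos hjd]
          have heq : (⟨((j.castSucc : Fin (d+1)) : ℕ), hjd⟩ : Fin d) = j := by ext; simp
          rw [heq]
          omega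
    · rintro (h | ⟨i, h, _⟩)
      · exact h.2.2
      · exact h
  -- polyDomain is disjoint from every Bad set
  have hdisj : Disjoint (polyDomain d N ℓ) (Finset.univ.biUnion Bad) := by
    rw [Finset.disjoint_left]
    intro x hx hx'
    rw [mem_polyDomain] at hx
    simp only [Finset.mem_biUnion, Finset.mem_univ, true_and] at hx'
    obtain ⟨i, hi⟩ := hx'
    rw [memBad] at hi
    by_cases h : (i : ℕ) < d
    · rw [dif_pos h] at hi
      have h1 := hx.1 ⟨i, h⟩
      have h2 : (⟨(i : ℕ), h⟩ : Fin d).castSucc = i := by ext; simp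
      rw [h2] at h1
      omega
    · rw [dif_neg h] at hi
      have h2 : i = Fin.last d := by ext; simp; omega
      rw [h2] at hi
      have := hx.2.1
      omega
  -- Bad sets are pairwise disjoint
  have hpairwise : ∀ i ∈ (Finset.univ : Finset (Fin (d + 1))), ∀ j ∈ Finset.univ,
      i ≠ j → Disjoint (Bad i) (Bad j) := by
    intro i _ j _ hij
    rw [Finset.disjoint_left]
    intro x hxi hxj
    rw [memBad] at hxi hxj
    have hsum := hxi.1
    have key : ∀ a b : Fin (d + 1), a < b → x ∈ Bad a → x ∈ Bad b → False := by
      intro a b hab hxa hxb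
      rw [memBad] at hxa hxb
      have hNab := hpair a b hab
      by_cases ha : (a : ℕ) < d
      · rw [dif_pos ha] at hxa
        by_cases hb : (b : ℕ) < d
        · rw [dif_pos hb] at hxb
          have hne : (⟨(a:ℕ), ha⟩ : Fin d) ≠ ⟨(b:ℕ), hb⟩ := by
            intro h; apply absurd (congrArg Fin.val h); simp; omega
          have hle2 : x ⟨(a:ℕ), ha⟩ + x ⟨(b:ℕ), hb⟩ ≤ ∑ j, x j := by
            have hsub : ({⟨(a:ℕ), ha⟩, ⟨(b:ℕ), hb⟩} : Finset (Fin d)) ⊆ Finset.univ :=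
              Finset.subset_univ _
            have := Finset.sum_le_sum_of_subset (f := x) hsub
            rwa [Finset.sum_pair hne] at this
          omega
        · rw [dif_neg hb] at hxb
          have hxav : x ⟨(a:ℕ), ha⟩ ≤ ∑ j, x j :=
            Finset.single_le_sum (f := x) (fun j _ => Nat.zero_le _) (Finset.mem_univ _)
          omega
      · -- a not < d means a = last, but a < b ≤ last, contradiction
        have hav : (a : ℕ) = d := by have := a.isLt; omega
        have hbv : (b : ℕ) < d + 1 := b.isLt
        have hlt := (Fin.lt_def).mp hab
        omega
    rcases lt_or_gt_of_ne hij with h | h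
    · exact key i j h (by rw [memBad]; exact hxi) (by rw [memBad]; exact hxj)
    · exact key j i h (by rw [memBad]; exact hxj) (by rw [memBad]; exact hxi)
  -- counting
  have hcount : (N + d).choose d = (polyDomain d N ℓ).card + ∑ i, (Bad i).card := by
    rw [← card_simplexF d N, hcover, Finset.card_union_of_disjoint hdisj,
      Finset.card_biUnion hpairwise]
  -- card of each Bad set
  have hBadCard : ∀ i : Fin (d + 1), (Bad i).card = (N - ℓ i + d - 1).choose d := by
    intro i
    by_cases hN' : ℓ i = N
    · -- Bad i is empty
      have hempty : Bad i = ∅ := by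
        ext x
        simp only [Finset.notMem_empty, iff_false]
        intro hx
        rw [memBad] at hx
        by_cases h : (i : ℕ) < d
        · rw [dif_pos h] at hx
          have : x ⟨(i:ℕ), h⟩ ≤ ∑ j, x j :=
            Finset.single_le_sum (f := x) (fun j _ => Nat.zero_le _) (Finset.mem_univ _)
          omega
        · rw [dif_neg h] at hx
          omega
      rw [hempty, Finset.card_empty]
      have : N - ℓ i + d - 1 = d - 1 := by omega
      rw [this]
      exact (Nat.choose_eq_zero_of_lt (by omega)).symm
    · have hlt : ℓ i < N := lt_of_le_of_ne (hle i) hN'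
      have harith : N - ℓ i + d - 1 = N - ℓ i - 1 + d := by omega
      rw [harith, ← card_simplexF d (N - ℓ i - 1)]
      by_cases h : (i : ℕ) < d
      · -- bijection via shifting coordinate ⟨i, h⟩
        set a : Fin d := ⟨(i : ℕ), h⟩ with ha
        have hsum_update : ∀ (x : Fin d → ℕ) (v : ℕ),
            ∑ j, Function.update x a v j = v + ∑ j ∈ Finset.univ.erase a, x j := by
          intro x v
          rw [Finset.sum_update_of_mem (Finset.mem_univ a)]
          congr 1
          · exact Finset.sum_congr (by rw [Finset.sdiff_singleton_eq_erase]) (fun _ _ => rfl)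
        have hsum_split : ∀ x : Fin d → ℕ,
            ∑ j, x j = x a + ∑ j ∈ Finset.univ.erase a, x j := by
          intro x
          exact (Finset.add_sum_erase _ x (Finset.mem_univ a)).symm
        apply Finset.card_nbij' (i := fun x => Function.update x a (x a - (ℓ i + 1)))
          (j := fun y => Function.update y a (y a + (ℓ i + 1)))
        · intro x hx
          simp only [Finset.mem_coe] at hx ⊢
          rw [memBad] at hx
          rw [dif_pos h] at hx
          rw [← ha] at hx
          rw [mem_simplexF, hsum_update]
          have := hsum_split x
          omega
        · intro y hy
          simp only [Finset.mem_coe] at hy ⊢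
          rw [mem_simplexF] at hy
          rw [memBad, dif_pos h, ← ha]
          constructor
          · rw [hsum_update]
            have := hsum_split y
            omega
          · rw [Function.update_self]
            omega
        · intro x hx
          rw [Finset.mem_coe, memBad, dif_pos h, ← ha] at hx
          beta_reduce
          rw [Function.update_idem, Function.update_self]
          have : x a - (ℓ i + 1) + (ℓ i + 1) = x a := by omega
          rw [this, Function.update_eq_self]
        · intro y hy
          beta_reduce
          rw [Function.update_idem, Function.update_self]
          have : y a + (ℓ i + 1) - (ℓ i + 1) = y a := by omega
          rw [this, Function.update_eq_self]
      · -- i = last, Bad i = simplexF d (N - ℓ i - 1)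
        congr 1
        ext x
        rw [memBad, dif_neg h, mem_simplexF]
        omega
  have hsum : ∑ i, (Bad i).card = ∑ i : Fin (d + 1), (N - ℓ i + d - 1).choose d :=
    Finset.sum_congr rfl fun i _ => hBadCard i
  rw [hsum] at hcount
  have := congrArg (fun n : ℕ => (n : ℤ)) hcount
  push_cast at this
  linarith
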